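/- For every two nonempty finite simple graphs G and H, A(G × H) = max{A(G), A(H)}, where A denotes the ultimate categorical independence ratio and × the categorical product. -/

import Mathlib

open scoped Classical
open Filter
set_option linter.unusedSectionVars false
set_option linter.unusedVariables false
set_option maxHeartbeats 1000000

/-- Categorical (tensor) product of two simple graphs. -/
def tensorProd {α β : Type*} (G : SimpleGraph α) (H : SimpleGraph β) :
    SimpleGraph (α × β) where
  Adj p q := G.Adj p.1 q.1 ∧ H.Adj p.2 q.2
  symm := ⟨fun p q h => ⟨h.1.symm, h.2.symm⟩⟩
  loopless := ⟨fun p h => G.ne_of_adj h.1 rfl⟩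

/-- A finset is independent. -/
def IsIndep {α : Type*} (G : SimpleGraph α) (U : Finset α) : Prop :=
  ∀ u ∈ U, ∀ v ∈ U, ¬ G.Adj u v

/-- Neighborhood of a finset. -/
noncomputable def nbhd {α : Type*} [Fintype α] (G : SimpleGraph α) (U : Finset α) : Finset α :=
  Finset.univ.filter (fun v => ∃ u ∈ U, G.Adj u v)

/-- Independence number. -/
noncomputable def alphaNum {α : Type*} [Fintype α] (G : SimpleGraph α) : ℕ :=
  sSup {n : ℕ | ∃ U : Finset α, IsIndep G U ∧ U.card = n}

/-- Independence ratio. -/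
noncomputable def iRatio {α : Type*} [Fintype α] (G : SimpleGraph α) : ℝ :=
  (alphaNum G : ℝ) / (Fintype.card α : ℝ)

/-- a(G): the maximum of |U|/(|U|+|N(U)|) over nonempty independent sets. -/
noncomputable def aRatio {α : Type*} [Fintype α] (G : SimpleGraph α) : ℝ :=
  sSup {r : ℝ | ∃ U : Finset α, U.Nonempty ∧ IsIndep G U ∧
    r = (U.card : ℝ) / ((U.card : ℝ) + ((nbhd G U).card : ℝ))}

/-- b(G): the minimum of |N(U)|/|U| over nonempty independent sets. -/
noncomputable def bRatio {α : Type*} [Fintype α] (G : SimpleGraph α) : ℝ :=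
  sInf {r : ℝ | ∃ U : Finset α, U.Nonempty ∧ IsIndep G U ∧
    r = ((nbhd G U).card : ℝ) / (U.card : ℝ)}

/-- a*(G). -/
noncomputable def aStar {α : Type*} [Fintype α] (G : SimpleGraph α) : ℝ :=
  if aRatio G ≤ 1/2 then aRatio G else 1

/-- k-th categorical power of G. -/
def tensorPow {α : Type*} (G : SimpleGraph α) (k : ℕ) : SimpleGraph (Fin k → α) where
  Adj x y := x ≠ y ∧ ∀ i, G.Adj (x i) (y i)
  symm := ⟨fun x y h => ⟨h.1.symm, fun i => (h.2 i).symm⟩⟩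
  loopless := ⟨fun x h => h.1 rfl⟩

/-- Disjoint union of two simple graphs. -/
def disjUnion {α β : Type*} (G : SimpleGraph α) (H : SimpleGraph β) :
    SimpleGraph (α ⊕ β) where
  Adj p q := match p, q with
    | Sum.inl a, Sum.inl b => G.Adj a b
    | Sum.inr a, Sum.inr b => H.Adj a b
    | _, _ => False
  symm := ⟨by rintro (a|a) (b|b) h <;> simp_all <;> exact h.symm⟩
  loopless := ⟨by rintro (a|a) h <;> simp_all⟩

section Basics
open Finset
variable {γ : Type*} [Fintype γ] {G : SimpleGraph γ} {U R : Finset γ}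

lemma mem_nbhd {v : γ} : v ∈ nbhd G U ↔ ∃ u ∈ U, G.Adj u v := by
  simp [nbhd]

lemma nbhd_mono {U V : Finset γ} (h : U ⊆ V) : nbhd G U ⊆ nbhd G V := by
  intro v hv
  obtain ⟨u, hu, ha⟩ := mem_nbhd.1 hv
  exact mem_nbhd.2 ⟨u, h hu, ha⟩

lemma indep_empty (G : SimpleGraph γ) : IsIndep G (∅ : Finset γ) :=
  fun u hu => absurd hu (Finset.notMem_empty _)

lemma indep_singleton (G : SimpleGraph γ) (v : γ) : IsIndep G {v} := by
  intro u hu w hw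
  simp only [Finset.mem_singleton] at hu hw
  rw [hu, hw]; exact G.loopless.irrefl v

lemma indep_not_mem_nbhd (h : IsIndep G U) {v : γ} (hv : v ∈ U) : v ∉ nbhd G U := by
  intro hn
  obtain ⟨u, hu, ha⟩ := mem_nbhd.1 hn
  exact h u hu v hv ha

lemma indep_disjoint_nbhd (h : IsIndep G U) : Disjoint U (nbhd G U) :=
  Finset.disjoint_left.2 (fun {v} hv => indep_not_mem_nbhd h hv)

-- alphaNum basics
lemma alpha_set_nonempty (G : SimpleGraph γ) :
    {n : ℕ | ∃ U : Finset γ, IsIndep G U ∧ U.card = n}.Nonempty :=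
  ⟨0, ∅, indep_empty G, Finset.card_empty⟩

lemma alpha_set_bdd (G : SimpleGraph γ) :
    BddAbove {n : ℕ | ∃ U : Finset γ, IsIndep G U ∧ U.card = n} := by
  refine ⟨Fintype.card γ, fun n hn => ?_⟩
  obtain ⟨U, _, rfl⟩ := hn
  exact Finset.card_le_univ U

lemma le_alphaNum (h : IsIndep G U) : U.card ≤ alphaNum G :=
  le_csSup (alpha_set_bdd G) ⟨U, h, rfl⟩

lemma exists_alpha (G : SimpleGraph γ) :
    ∃ U : Finset γ, IsIndep G U ∧ U.card = alphaNum G :=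
  Nat.sSup_mem (alpha_set_nonempty G) (alpha_set_bdd G)

lemma alphaNum_le_card (G : SimpleGraph γ) : alphaNum G ≤ Fintype.card γ := by
  obtain ⟨U, _, hc⟩ := exists_alpha G
  exact hc ▸ Finset.card_le_univ U

lemma one_le_alphaNum [Nonempty γ] (G : SimpleGraph γ) : 1 ≤ alphaNum G := by
  have := le_alphaNum (indep_singleton G (Classical.arbitrary γ))
  simpa using this

-- ratio set basics
lemma b_set_nonempty [Nonempty γ] (G : SimpleGraph γ) :
    {r : ℝ | ∃ U : Finset γ, U.Nonempty ∧ IsIndep G U ∧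
      r = ((nbhd G U).card : ℝ) / (U.card : ℝ)}.Nonempty := by
  refine ⟨_, {Classical.arbitrary γ}, Finset.singleton_nonempty _, indep_singleton G _, rfl⟩

lemma a_set_nonempty [Nonempty γ] (G : SimpleGraph γ) :
    {r : ℝ | ∃ U : Finset γ, U.Nonempty ∧ IsIndep G U ∧
      r = (U.card : ℝ) / ((U.card : ℝ) + ((nbhd G U).card : ℝ))}.Nonempty := by
  refine ⟨_, {Classical.arbitrary γ}, Finset.singleton_nonempty _, indep_singleton G _, rfl⟩

lemma b_set_finite (G : SimpleGraph γ) :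
    {r : ℝ | ∃ U : Finset γ, U.Nonempty ∧ IsIndep G U ∧
      r = ((nbhd G U).card : ℝ) / (U.card : ℝ)}.Finite := by
  apply Set.Finite.subset (Set.finite_range
    (fun U : Finset γ => ((nbhd G U).card : ℝ) / (U.card : ℝ)))
  rintro r ⟨U, _, _, rfl⟩
  exact ⟨U, rfl⟩

lemma a_set_finite (G : SimpleGraph γ) :
    {r : ℝ | ∃ U : Finset γ, U.Nonempty ∧ IsIndep G U ∧
      r = (U.card : ℝ) / ((U.card : ℝ) + ((nbhd G U).card : ℝ))}.Finite := by
  apply Set.Finite.subset (Set.finite_range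
    (fun U : Finset γ => (U.card : ℝ) / ((U.card : ℝ) + ((nbhd G U).card : ℝ))))
  rintro r ⟨U, _, _, rfl⟩
  exact ⟨U, rfl⟩

lemma bRatio_le (hU : U.Nonempty) (hI : IsIndep G U) :
    bRatio G ≤ ((nbhd G U).card : ℝ) / (U.card : ℝ) :=
  csInf_le (b_set_finite G).bddBelow ⟨U, hU, hI, rfl⟩

lemma le_bRatio [Nonempty γ] {c : ℝ}
    (h : ∀ U : Finset γ, U.Nonempty → IsIndep G U →
      c ≤ ((nbhd G U).card : ℝ) / (U.card : ℝ)) : c ≤ bRatio G := by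
  refine le_csInf (b_set_nonempty G) ?_
  rintro r ⟨U, hU, hI, rfl⟩
  exact h U hU hI

lemma bRatio_nonneg [Nonempty γ] (G : SimpleGraph γ) : 0 ≤ bRatio G :=
  le_bRatio (fun U hU hI => by positivity)

lemma bRatio_mem [Nonempty γ] (G : SimpleGraph γ) :
    ∃ U : Finset γ, U.Nonempty ∧ IsIndep G U ∧
      bRatio G = ((nbhd G U).card : ℝ) / (U.card : ℝ) :=
  (b_set_nonempty G).csInf_mem (b_set_finite G)

lemma le_aRatio (hU : U.Nonempty) (hI : IsIndep G U) :
    (U.card : ℝ) / ((U.card : ℝ) + ((nbhd G U).card : ℝ)) ≤ aRatio G :=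
  le_csSup (a_set_finite G).bddAbove ⟨U, hU, hI, rfl⟩

lemma aRatio_le [Nonempty γ] {c : ℝ}
    (h : ∀ U : Finset γ, U.Nonempty → IsIndep G U →
      (U.card : ℝ) / ((U.card : ℝ) + ((nbhd G U).card : ℝ)) ≤ c) : aRatio G ≤ c := by
  refine csSup_le (a_set_nonempty G) ?_
  rintro r ⟨U, hU, hI, rfl⟩
  exact h U hU hI

lemma aRatio_mem [Nonempty γ] (G : SimpleGraph γ) :
    ∃ U : Finset γ, U.Nonempty ∧ IsIndep G U ∧
      aRatio G = (U.card : ℝ) / ((U.card : ℝ) + ((nbhd G U).card : ℝ)) :=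
  (a_set_nonempty G).csSup_mem (a_set_finite G)

lemma aRatio_eq_inv [Nonempty γ] (G : SimpleGraph γ) :
    aRatio G = 1 / (1 + bRatio G) := by
  have hb0 : 0 ≤ bRatio G := bRatio_nonneg G
  apply le_antisymm
  · refine aRatio_le (fun U hU hI => ?_)
    have hu : (0:ℝ) < U.card := by exact_mod_cast hU.card_pos
    have h1 : bRatio G ≤ ((nbhd G U).card : ℝ) / (U.card : ℝ) := bRatio_le hU hI
    have h2 : 1 + bRatio G ≤ ((U.card : ℝ) + (nbhd G U).card) / (U.card : ℝ) := by
      rw [add_div]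
      rw [div_self (ne_of_gt hu)]
      linarith
    calc (U.card : ℝ) / ((U.card : ℝ) + (nbhd G U).card)
        = 1 / (((U.card : ℝ) + (nbhd G U).card) / (U.card : ℝ)) := by
          rw [one_div_div]
      _ ≤ 1 / (1 + bRatio G) := by
          apply one_div_le_one_div_of_le (by linarith) h2
  · obtain ⟨U, hU, hI, hb⟩ := bRatio_mem G
    have hu : (0:ℝ) < U.card := by exact_mod_cast hU.card_pos
    have heq : 1 / (1 + bRatio G) =
        (U.card : ℝ) / ((U.card : ℝ) + ((nbhd G U).card : ℝ)) := by
      rw [hb]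
      have h1 : 1 + ((nbhd G U).card : ℝ) / (U.card : ℝ)
          = ((U.card : ℝ) + (nbhd G U).card) / (U.card : ℝ) := by
        field_simp
      rw [h1, one_div_div]
    rw [heq]
    exact le_aRatio hU hI
end Basics

section FBsec
open Finset
variable {γ : Type*} [Fintype γ] {G : SimpleGraph γ}

def Expand (G : SimpleGraph γ) (c : ℝ) : Prop :=
  ∀ U : Finset γ, IsIndep G U → c * U.card ≤ ((nbhd G U).card : ℝ)

lemma FB {c : ℝ} (hc : 0 ≤ c) (hE : Expand G c) (R : Finset γ) :
    ((R ∩ nbhd G R).card : ℝ) + c * (((R \ nbhd G R).card : ℝ))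
      ≤ ((nbhd G R).card : ℝ) := by
  classical
  set I := R \ nbhd G R with hIdef
  have hI : IsIndep G I := by
    intro u hu v hv hadj
    have hvn : v ∈ nbhd G R := mem_nbhd.2 ⟨u, (Finset.mem_sdiff.1 hu).1, hadj⟩
    exact (Finset.mem_sdiff.1 hv).2 hvn
  have hsub : (R ∩ nbhd G R) ∪ nbhd G I ⊆ nbhd G R := by
    intro v hv
    rcases Finset.mem_union.1 hv with h | h
    · exact (Finset.mem_inter.1 h).2
    · exact nbhd_mono (Finset.sdiff_subset) h
  have hdisj : Disjoint (R ∩ nbhd G R) (nbhd G I) := by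
    rw [Finset.disjoint_left]
    intro v hv hvN
    obtain ⟨u, hu, hadj⟩ := mem_nbhd.1 hvN
    have hun : u ∈ nbhd G R := mem_nbhd.2 ⟨v, (Finset.mem_inter.1 hv).1, hadj.symm⟩
    exact (Finset.mem_sdiff.1 hu).2 hun
  have hcard : (R ∩ nbhd G R).card + (nbhd G I).card ≤ (nbhd G R).card := by
    rw [← Finset.card_union_of_disjoint hdisj]
    exact Finset.card_le_card hsub
  have hcc : ((R ∩ nbhd G R).card : ℝ) + ((nbhd G I).card : ℝ)
      ≤ ((nbhd G R).card : ℝ) := by exact_mod_cast hcard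
  have := hE I hI
  linarith
end FBsec

section Fiber
open Finset
variable {α β : Type*} [Fintype α] [Fintype β]

lemma card_fiber_fst (T : Finset (α × β)) :
    T.card = ∑ x : α, (Finset.univ.filter (fun y : β => (x, y) ∈ T)).card := by
  classical
  rw [Finset.card_eq_sum_card_fiberwise (f := Prod.fst) (t := Finset.univ)
    (fun p _ => Finset.mem_univ _)]
  refine Finset.sum_congr rfl (fun x _ => ?_)
  have h : Finset.univ.filter (fun y : β => (x, y) ∈ T)
      = (T.filter (fun p => p.1 = x)).image Prod.snd := by
    ext y
    simp only [Finset.mem_filter, Finset.mem_univ, true_and, Finset.mem_image]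
    constructor
    · intro h; exact ⟨(x, y), ⟨h, rfl⟩, rfl⟩
    · rintro ⟨p, ⟨hpT, hpx⟩, rfl⟩
      rw [← hpx]; exact hpT
  rw [h, Finset.card_image_of_injOn]
  intro p hp q hq hpq
  simp only [Finset.coe_filter, Set.mem_setOf_eq] at hp hq
  ext
  · rw [hp.2, hq.2]
  · exact hpq

lemma card_fiber_snd (T : Finset (α × β)) :
    T.card = ∑ y : β, (Finset.univ.filter (fun x : α => (x, y) ∈ T)).card := by
  classical
  rw [Finset.card_eq_sum_card_fiberwise (f := Prod.snd) (t := Finset.univ)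
    (fun p _ => Finset.mem_univ _)]
  refine Finset.sum_congr rfl (fun y _ => ?_)
  have h : Finset.univ.filter (fun x : α => (x, y) ∈ T)
      = (T.filter (fun p => p.2 = y)).image Prod.fst := by
    ext x
    simp only [Finset.mem_filter, Finset.mem_univ, true_and, Finset.mem_image]
    constructor
    · intro h; exact ⟨(x, y), ⟨h, rfl⟩, rfl⟩
    · rintro ⟨p, ⟨hpT, hpy⟩, rfl⟩
      rw [← hpy]; exact hpT
  rw [h, Finset.card_image_of_injOn]
  intro p hp q hq hpq
  simp only [Finset.coe_filter, Set.mem_setOf_eq] at hp hq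
  ext
  · exact hpq
  · rw [hp.2, hq.2]
end Fiber

section Crux
variable {α β : Type*} [Fintype α] [Fintype β] (G : SimpleGraph α) (H : SimpleGraph β)

theorem crux {c : ℝ} (hc1 : 1 ≤ c) (hEG : Expand G c) (hEH : Expand H c) :
    Expand (tensorProd G H) c := by
  intro U hI
  have hc0 : (0:ℝ) ≤ c := le_trans zero_le_one hc1
  set P := tensorProd G H with hP
  -- rows and the sets S_y
  set row : α → Finset β := fun x => Finset.univ.filter (fun y => (x, y) ∈ U) with hrow
  set Sy : β → Finset α := fun y => Finset.univ.filter (fun x => y ∈ nbhd H (row x)) with hSy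
  set col : β → Finset α := fun y => Finset.univ.filter (fun x => (x, y) ∈ U) with hcol
  -- (c1) |U| = Σ_x |row x|
  have c1 : (U.card : ℝ) = ∑ x : α, ((row x).card : ℝ) := by
    rw [card_fiber_fst U]; push_cast; rfl
  -- (c2) |N_P(U)| = Σ_y |N_G(S_y)|
  have c2 : ((nbhd P U).card : ℝ) = ∑ y : β, ((nbhd G (Sy y)).card : ℝ) := by
    rw [card_fiber_snd (nbhd P U)]
    push_cast
    refine congrArg _ (funext fun y => ?_)
    congr 1
    refine congrArg _ ?_
    ext x
    simp only [Finset.mem_filter, Finset.mem_univ, true_and]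
    constructor
    · intro hx
      obtain ⟨p, hpU, hadj⟩ := mem_nbhd.1 hx
      refine mem_nbhd.2 ⟨p.1, ?_, hadj.1⟩
      rw [hSy]
      simp only [Finset.mem_filter, Finset.mem_univ, true_and]
      exact mem_nbhd.2 ⟨p.2, by simp [hrow, hpU], hadj.2⟩
    · intro hx
      obtain ⟨x', hx', hadjG⟩ := mem_nbhd.1 hx
      rw [hSy] at hx'
      simp only [Finset.mem_filter, Finset.mem_univ, true_and] at hx'
      obtain ⟨y', hy', hadjH⟩ := mem_nbhd.1 hx'
      rw [hrow] at hy'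
      simp only [Finset.mem_filter, Finset.mem_univ, true_and] at hy'
      exact mem_nbhd.2 ⟨(x', y'), hy', ⟨hadjG, hadjH⟩⟩
  -- (c3) Σ_y |S_y| = Σ_x |N_H(row x)|
  have c3 : (∑ y : β, ((Sy y).card : ℝ)) = ∑ x : α, ((nbhd H (row x)).card : ℝ) := by
    have h1 := card_fiber_snd (Finset.univ.filter (fun p : α × β => p.2 ∈ nbhd H (row p.1)))
    have h2 := card_fiber_fst (Finset.univ.filter (fun p : α × β => p.2 ∈ nbhd H (row p.1)))
    have e1 : ∀ y : β, Finset.univ.filter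
        (fun x : α => (x, y) ∈ Finset.univ.filter (fun p : α × β => p.2 ∈ nbhd H (row p.1)))
        = Sy y := by
      intro y; ext x; simp [hSy]
    have e2 : ∀ x : α, Finset.univ.filter
        (fun y : β => (x, y) ∈ Finset.univ.filter (fun p : α × β => p.2 ∈ nbhd H (row p.1)))
        = nbhd H (row x) := by
      intro x; ext y; simp
    have : (∑ y : β, (Sy y).card) = ∑ x : α, (nbhd H (row x)).card := by
      calc (∑ y : β, (Sy y).card)
          = _ := by rw [← Finset.sum_congr rfl (fun y _ => congrArg Finset.card (e1 y))]
        _ = ∑ x : α, (nbhd H (row x)).card := by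
            rw [← h1, h2]
            exact Finset.sum_congr rfl (fun x _ => congrArg Finset.card (e2 x))
    exact_mod_cast this
  -- (c4) Σ_y |col y ∩ S_y| = Σ_x |row x ∩ N_H(row x)|
  have c4 : (∑ y : β, ((col y ∩ Sy y).card : ℝ))
      = ∑ x : α, ((row x ∩ nbhd H (row x)).card : ℝ) := by
    have h1 := card_fiber_snd (Finset.univ.filter
      (fun p : α × β => p ∈ U ∧ p.2 ∈ nbhd H (row p.1)))
    have h2 := card_fiber_fst (Finset.univ.filter
      (fun p : α × β => p ∈ U ∧ p.2 ∈ nbhd H (row p.1)))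
    have e1 : ∀ y : β, Finset.univ.filter
        (fun x : α => (x, y) ∈ Finset.univ.filter
          (fun p : α × β => p ∈ U ∧ p.2 ∈ nbhd H (row p.1)))
        = col y ∩ Sy y := by
      intro y; ext x
      simp only [Finset.mem_filter, Finset.mem_univ, true_and, Finset.mem_inter, hcol, hSy]
    have e2 : ∀ x : α, Finset.univ.filter
        (fun y : β => (x, y) ∈ Finset.univ.filter
          (fun p : α × β => p ∈ U ∧ p.2 ∈ nbhd H (row p.1)))
        = row x ∩ nbhd H (row x) := by
      intro x; ext y
      simp only [Finset.mem_filter, Finset.mem_univ, true_and, Finset.mem_inter, hrow]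
    have : (∑ y : β, (col y ∩ Sy y).card) = ∑ x : α, (row x ∩ nbhd H (row x)).card := by
      calc (∑ y : β, (col y ∩ Sy y).card)
          = _ := by rw [← Finset.sum_congr rfl (fun y _ => congrArg Finset.card (e1 y))]
        _ = ∑ x : α, (row x ∩ nbhd H (row x)).card := by
            rw [← h1, h2]
            exact Finset.sum_congr rfl (fun x _ => congrArg Finset.card (e2 x))
    exact_mod_cast this
  -- (c5) col y ∩ S_y ⊆ S_y \ N_G(S_y)
  have c5 : ∀ y : β, col y ∩ Sy y ⊆ Sy y \ nbhd G (Sy y) := by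
    intro y x hx
    obtain ⟨hxc, hxS⟩ := Finset.mem_inter.1 hx
    rw [Finset.mem_sdiff]
    refine ⟨hxS, ?_⟩
    intro hxN
    obtain ⟨x', hx'S, hadjG⟩ := mem_nbhd.1 hxN
    rw [hSy] at hx'S
    simp only [Finset.mem_filter, Finset.mem_univ, true_and] at hx'S
    obtain ⟨y', hy', hadjH⟩ := mem_nbhd.1 hx'S
    rw [hrow] at hy'
    simp only [Finset.mem_filter, Finset.mem_univ, true_and] at hy'
    rw [hcol] at hxc
    simp only [Finset.mem_filter, Finset.mem_univ, true_and] at hxc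
    exact hI (x', y') hy' (x, y) hxc ⟨hadjG, hadjH⟩
  -- abbreviations for the six sums
  set X1 := ∑ x : α, ((row x ∩ nbhd H (row x)).card : ℝ) with hX1
  set X2 := ∑ x : α, (((row x \ nbhd H (row x)).card : ℝ)) with hX2
  set X3 := ∑ x : α, ((nbhd H (row x)).card : ℝ) with hX3
  set Y1 := ∑ y : β, ((Sy y ∩ nbhd G (Sy y)).card : ℝ) with hY1
  set Y2 := ∑ y : β, (((Sy y \ nbhd G (Sy y)).card : ℝ)) with hY2
  set Y3 := ∑ y : β, ((nbhd G (Sy y)).card : ℝ) with hY3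
  set Yc := ∑ y : β, ((col y ∩ Sy y).card : ℝ) with hYc
  have hU12 : (U.card : ℝ) = X1 + X2 := by
    rw [c1, hX1, hX2, ← Finset.sum_add_distrib]
    refine Finset.sum_congr rfl (fun x _ => ?_)
    have := Finset.card_inter_add_card_sdiff (row x) (nbhd H (row x))
    exact_mod_cast this.symm
  have hXF : X1 + c * X2 ≤ X3 := by
    rw [hX1, hX2, hX3, Finset.mul_sum, ← Finset.sum_add_distrib]
    exact Finset.sum_le_sum (fun x _ => FB hc0 hEH (row x))
  have hYF : Y1 + c * Y2 ≤ Y3 := by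
    rw [hY1, hY2, hY3, Finset.mul_sum, ← Finset.sum_add_distrib]
    exact Finset.sum_le_sum (fun y _ => FB hc0 hEG (Sy y))
  have hSplitY : ∑ y : β, ((Sy y).card : ℝ) = Y1 + Y2 := by
    rw [hY1, hY2, ← Finset.sum_add_distrib]
    refine Finset.sum_congr rfl (fun y _ => ?_)
    have := Finset.card_inter_add_card_sdiff (Sy y) (nbhd G (Sy y))
    exact_mod_cast this.symm
  have hc3' : X3 = Y1 + Y2 := c3.symm.trans hSplitY
  have hc4' : X1 = Yc := c4.symm
  have hc5' : Yc ≤ Y2 := by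
    rw [hYc, hY2]
    exact Finset.sum_le_sum (fun y _ => by
      exact_mod_cast Finset.card_le_card (c5 y))
  have hfin : c * (U.card : ℝ) ≤ Y3 := by nlinarith [hXF, hYF]
  calc c * (U.card : ℝ) ≤ Y3 := hfin
    _ = ((nbhd P U).card : ℝ) := c2.symm
end Crux

section Transport
open Finset
variable {γ δ : Type*} [Fintype γ] [Fintype δ] {K : SimpleGraph γ} {K' : SimpleGraph δ}

def AdjEquiv (K : SimpleGraph γ) (K' : SimpleGraph δ) (e : γ ≃ δ) : Prop :=
  ∀ a b, K.Adj a b ↔ K'.Adj (e a) (e b)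

lemma AdjEquiv.symm' {e : γ ≃ δ} (he : AdjEquiv K K' e) : AdjEquiv K' K e.symm := by
  intro a b
  rw [he (e.symm a) (e.symm b)]
  simp

lemma AdjEquiv.indep_image {e : γ ≃ δ} (he : AdjEquiv K K' e) {U : Finset γ}
    (h : IsIndep K U) : IsIndep K' (U.image e) := by
  intro u hu v hv hadj
  obtain ⟨a, ha, rfl⟩ := Finset.mem_image.1 hu
  obtain ⟨b, hb, rfl⟩ := Finset.mem_image.1 hv
  exact h a ha b hb ((he a b).2 hadj)

lemma AdjEquiv.nbhd_image {e : γ ≃ δ} (he : AdjEquiv K K' e) (U : Finset γ) :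
    nbhd K' (U.image e) = (nbhd K U).image e := by
  ext v
  rw [mem_nbhd]
  constructor
  · rintro ⟨u, hu, hadj⟩
    obtain ⟨a, ha, rfl⟩ := Finset.mem_image.1 hu
    refine Finset.mem_image.2 ⟨e.symm v, ?_, by simp⟩
    refine mem_nbhd.2 ⟨a, ha, ?_⟩
    rw [he]
    simpa using hadj
  · intro hv
    obtain ⟨b, hb, rfl⟩ := Finset.mem_image.1 hv
    obtain ⟨a, ha, hadj⟩ := mem_nbhd.1 hb
    exact ⟨e a, Finset.mem_image_of_mem e ha, (he a b).1 hadj⟩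

lemma AdjEquiv.alpha_le {e : γ ≃ δ} (he : AdjEquiv K K' e) : alphaNum K ≤ alphaNum K' := by
  obtain ⟨U, hI, hc⟩ := exists_alpha K
  calc alphaNum K = U.card := hc.symm
    _ = (U.image e).card := (Finset.card_image_of_injective _ e.injective).symm
    _ ≤ alphaNum K' := le_alphaNum (he.indep_image hI)

lemma AdjEquiv.alpha_eq {e : γ ≃ δ} (he : AdjEquiv K K' e) : alphaNum K = alphaNum K' :=
  le_antisymm he.alpha_le he.symm'.alpha_le

lemma AdjEquiv.iRatio_eq {e : γ ≃ δ} (he : AdjEquiv K K' e) : iRatio K = iRatio K' := by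
  unfold iRatio
  rw [he.alpha_eq, Fintype.card_congr e]

lemma AdjEquiv.bset_subset {e : γ ≃ δ} (he : AdjEquiv K K' e) :
    {r : ℝ | ∃ U : Finset γ, U.Nonempty ∧ IsIndep K U ∧
      r = ((nbhd K U).card : ℝ) / (U.card : ℝ)} ⊆
    {r : ℝ | ∃ U : Finset δ, U.Nonempty ∧ IsIndep K' U ∧
      r = ((nbhd K' U).card : ℝ) / (U.card : ℝ)} := by
  rintro r ⟨U, hU, hI, rfl⟩
  refine ⟨U.image e, hU.image e, he.indep_image hI, ?_⟩
  rw [he.nbhd_image, Finset.card_image_of_injective _ e.injective,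
    Finset.card_image_of_injective _ e.injective]

lemma AdjEquiv.aset_subset {e : γ ≃ δ} (he : AdjEquiv K K' e) :
    {r : ℝ | ∃ U : Finset γ, U.Nonempty ∧ IsIndep K U ∧
      r = (U.card : ℝ) / ((U.card : ℝ) + ((nbhd K U).card : ℝ))} ⊆
    {r : ℝ | ∃ U : Finset δ, U.Nonempty ∧ IsIndep K' U ∧
      r = (U.card : ℝ) / ((U.card : ℝ) + ((nbhd K' U).card : ℝ))} := by
  rintro r ⟨U, hU, hI, rfl⟩
  refine ⟨U.image e, hU.image e, he.indep_image hI, ?_⟩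
  rw [he.nbhd_image, Finset.card_image_of_injective _ e.injective,
    Finset.card_image_of_injective _ e.injective]

lemma AdjEquiv.bRatio_eq [Nonempty γ] {e : γ ≃ δ} (he : AdjEquiv K K' e) :
    bRatio K = bRatio K' := by
  have : Nonempty δ := Nonempty.map e inferInstance
  apply le_antisymm
  · exact csInf_le_csInf (b_set_finite K).bddBelow (b_set_nonempty K') he.symm'.bset_subset
  · exact csInf_le_csInf (b_set_finite K').bddBelow (b_set_nonempty K) he.bset_subset

lemma AdjEquiv.aRatio_eq [Nonempty γ] {e : γ ≃ δ} (he : AdjEquiv K K' e) :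
    aRatio K = aRatio K' := by
  have : Nonempty δ := Nonempty.map e inferInstance
  apply le_antisymm
  · exact csSup_le_csSup (a_set_finite K').bddAbove (a_set_nonempty K) he.aset_subset
  · exact csSup_le_csSup (a_set_finite K).bddAbove (a_set_nonempty K') he.symm'.aset_subset
end Transport

section ProdLemmas
open Finset
variable {α β : Type*} [Fintype α] [Fintype β] (G : SimpleGraph α) (H : SimpleGraph β)

lemma prodComm_adjEquiv : AdjEquiv (tensorProd G H) (tensorProd H G) (Equiv.prodComm α β) := by
  intro a b
  constructor
  · rintro ⟨h1, h2⟩; exact ⟨h2, h1⟩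
  · rintro ⟨h1, h2⟩; exact ⟨h2, h1⟩

lemma indep_prod_lift {U : Finset α} (h : IsIndep G U) :
    IsIndep (tensorProd G H) (U ×ˢ Finset.univ) := by
  rintro ⟨a, b⟩ hu ⟨a', b'⟩ hv ⟨hadj, _⟩
  exact h a (Finset.mem_product.1 hu).1 a' (Finset.mem_product.1 hv).1 hadj

lemma nbhd_prod_lift (U : Finset α) :
    nbhd (tensorProd G H) (U ×ˢ Finset.univ) = nbhd G U ×ˢ nbhd H Finset.univ := by
  ext ⟨x, y⟩
  rw [Finset.mem_product, mem_nbhd, mem_nbhd, mem_nbhd]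
  constructor
  · rintro ⟨⟨u, v⟩, huv, hadj, hadj2⟩
    obtain ⟨hu, _⟩ := Finset.mem_product.1 huv
    exact ⟨⟨u, hu, hadj⟩, ⟨v, Finset.mem_univ v, hadj2⟩⟩
  · rintro ⟨⟨u, hu, hadj⟩, ⟨v, _, hadj2⟩⟩
    exact ⟨(u, v), Finset.mem_product.2 ⟨hu, Finset.mem_univ v⟩, hadj, hadj2⟩

lemma alphaNum_prod_left : alphaNum G * Fintype.card β ≤ alphaNum (tensorProd G H) := by
  obtain ⟨U, hI, hc⟩ := exists_alpha G
  have := le_alphaNum (indep_prod_lift G H hI)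
  rwa [Finset.card_product, Finset.card_univ, hc] at this

lemma alphaNum_prod_right : alphaNum H * Fintype.card α ≤ alphaNum (tensorProd G H) := by
  rw [(prodComm_adjEquiv G H).alpha_eq]
  exact alphaNum_prod_left H G

lemma bRatio_prod_le_left [Nonempty α] [Nonempty β] :
    bRatio (tensorProd G H) ≤ bRatio G := by
  refine le_csInf (b_set_nonempty G) ?_
  rintro r ⟨U, hU, hI, rfl⟩
  have hu : (0:ℝ) < U.card := by exact_mod_cast hU.card_pos
  have hm : (0:ℝ) < (Fintype.card β : ℝ) := by exact_mod_cast Fintype.card_pos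
  have h1 : bRatio (tensorProd G H)
      ≤ ((nbhd (tensorProd G H) (U ×ˢ Finset.univ)).card : ℝ) / ((U ×ˢ (Finset.univ : Finset β)).card : ℝ) :=
    bRatio_le (hU.product ⟨Classical.arbitrary β, Finset.mem_univ _⟩) (indep_prod_lift G H hI)
  rw [nbhd_prod_lift, Finset.card_product, Finset.card_product, Finset.card_univ] at h1
  refine h1.trans ?_
  push_cast
  rw [div_le_div_iff₀ (by positivity) hu]
  have hNle : ((nbhd H Finset.univ).card : ℝ) ≤ (Fintype.card β : ℝ) := by
    exact_mod_cast Finset.card_le_univ _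
  have hNG : (0:ℝ) ≤ ((nbhd G U).card : ℝ) := by positivity
  calc ((nbhd G U).card : ℝ) * ((nbhd H Finset.univ).card : ℝ) * (U.card : ℝ)
      ≤ ((nbhd G U).card : ℝ) * (Fintype.card β : ℝ) * (U.card : ℝ) := by
        apply mul_le_mul_of_nonneg_right _ (le_of_lt hu)
        exact mul_le_mul_of_nonneg_left hNle hNG
    _ = ((nbhd G U).card : ℝ) * ((U.card : ℝ) * (Fintype.card β : ℝ)) := by ring
  
lemma bRatio_prod_le_right [Nonempty α] [Nonempty β] :
    bRatio (tensorProd G H) ≤ bRatio H := by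
  rw [(prodComm_adjEquiv G H).bRatio_eq]
  exact bRatio_prod_le_left H G

lemma aRatio_prod_ge_left [Nonempty α] [Nonempty β] :
    aRatio G ≤ aRatio (tensorProd G H) := by
  obtain ⟨U, hU, hI, hval⟩ := aRatio_mem G
  rw [hval]
  have hu : (0:ℝ) < U.card := by exact_mod_cast hU.card_pos
  have hm : (0:ℝ) < (Fintype.card β : ℝ) := by exact_mod_cast Fintype.card_pos
  have h1 := le_aRatio (G := tensorProd G H)
    (hU.product ⟨Classical.arbitrary β, Finset.mem_univ _⟩) (indep_prod_lift G H hI)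
  rw [nbhd_prod_lift, Finset.card_product, Finset.card_product, Finset.card_univ] at h1
  refine le_trans ?_ h1
  push_cast
  have hNle : ((nbhd H Finset.univ).card : ℝ) ≤ (Fintype.card β : ℝ) := by
    exact_mod_cast Finset.card_le_univ _
  have hNG : (0:ℝ) ≤ ((nbhd G U).card : ℝ) := by positivity
  have hden : (0:ℝ) < (U.card : ℝ) * (Fintype.card β : ℝ)
      + ((nbhd G U).card : ℝ) * ((nbhd H Finset.univ).card : ℝ) := by positivity
  rw [div_le_div_iff₀ (by positivity) hden]
  have : ((nbhd G U).card : ℝ) * ((nbhd H Finset.univ).card : ℝ)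
      ≤ ((nbhd G U).card : ℝ) * (Fintype.card β : ℝ) :=
    mul_le_mul_of_nonneg_left hNle hNG
  nlinarith [hu, hm]

lemma aRatio_prod_ge_right [Nonempty α] [Nonempty β] :
    aRatio H ≤ aRatio (tensorProd G H) := by
  rw [(prodComm_adjEquiv G H).aRatio_eq]
  exact aRatio_prod_ge_left H G

lemma expand_of_le_bRatio {γ : Type*} [Fintype γ] [Nonempty γ] {K : SimpleGraph γ} {c : ℝ}
    (hc : 0 ≤ c) (h : c ≤ bRatio K) : Expand K c := by
  intro U hI
  rcases U.eq_empty_or_nonempty with rfl | hU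
  · simp
  · have hu : (0:ℝ) < U.card := by exact_mod_cast hU.card_pos
    have := h.trans (bRatio_le hU hI)
    rw [le_div_iff₀ hu] at this
    linarith
 
lemma le_bRatio_of_expand {γ : Type*} [Fintype γ] [Nonempty γ] {K : SimpleGraph γ} {c : ℝ}
    (h : Expand K c) : c ≤ bRatio K := by
  refine le_bRatio (fun U hU hI => ?_)
  have hu : (0:ℝ) < U.card := by exact_mod_cast hU.card_pos
  rw [le_div_iff₀ hu]
  have := h U hI
  linarith

lemma bRatio_prod_ge [Nonempty α] [Nonempty β]
    (h1 : 1 ≤ bRatio G) (h2 : 1 ≤ bRatio H) :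
    min (bRatio G) (bRatio H) ≤ bRatio (tensorProd G H) := by
  set c := min (bRatio G) (bRatio H) with hc
  have hc1 : 1 ≤ c := le_min h1 h2
  have hc0 : 0 ≤ c := le_trans zero_le_one hc1
  have hEG : Expand G c := expand_of_le_bRatio hc0 (min_le_left _ _)
  have hEH : Expand H c := expand_of_le_bRatio hc0 (min_le_right _ _)
  exact le_bRatio_of_expand (crux G H hc1 hEG hEH)

lemma bRatio_prod_eq [Nonempty α] [Nonempty β]
    (h1 : 1 ≤ bRatio G) (h2 : 1 ≤ bRatio H) :
    bRatio (tensorProd G H) = min (bRatio G) (bRatio H) := by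
  refine le_antisymm (le_min (bRatio_prod_le_left G H) (bRatio_prod_le_right G H))
    (bRatio_prod_ge G H h1 h2)

lemma one_le_bRatio_iff {γ : Type*} [Fintype γ] [Nonempty γ] (K : SimpleGraph γ) :
    1 ≤ bRatio K ↔ aRatio K ≤ 1/2 := by
  rw [aRatio_eq_inv]
  have hb0 : 0 ≤ bRatio K := bRatio_nonneg K
  constructor
  · intro h
    rw [div_le_div_iff₀ (by linarith) (by norm_num)]
    linarith
  · intro h
    rw [div_le_div_iff₀ (by linarith) (by norm_num)] at h
    linarith

lemma aStar_prod [Nonempty α] [Nonempty β] :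
    aStar (tensorProd G H) = max (aStar G) (aStar H) := by
  unfold aStar
  by_cases hg : aRatio G ≤ 1/2 <;> by_cases hh : aRatio H ≤ 1/2
  · -- both small
    have h1 : 1 ≤ bRatio G := (one_le_bRatio_iff G).2 hg
    have h2 : 1 ≤ bRatio H := (one_le_bRatio_iff H).2 hh
    have hbp : bRatio (tensorProd G H) = min (bRatio G) (bRatio H) := bRatio_prod_eq G H h1 h2
    have haprod : aRatio (tensorProd G H) = max (aRatio G) (aRatio H) := by
      rw [aRatio_eq_inv, aRatio_eq_inv (G := G), aRatio_eq_inv (G := H), hbp]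
      rcases min_le_iff.1 (le_refl (min (bRatio G) (bRatio H))) with _ | _
      all_goals {
        rcases le_total (bRatio G) (bRatio H) with hle | hle
        · rw [min_eq_left hle, max_eq_left]
          apply one_div_le_one_div_of_le (by linarith) (by linarith)
        · rw [min_eq_right hle, max_eq_right]
          apply one_div_le_one_div_of_le (by linarith) (by linarith) }
    have hple : aRatio (tensorProd G H) ≤ 1/2 := by
      rw [haprod]; exact max_le hg hh
    rw [if_pos hple, if_pos hg, if_pos hh, haprod]
  · -- aRatio H > 1/2
    have hp : ¬ aRatio (tensorProd G H) ≤ 1/2 := by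
      intro hcon
      exact hh (le_trans (aRatio_prod_ge_right G H) hcon)
    rw [if_neg hp, if_pos hg, if_neg hh]
    have : aRatio G ≤ 1 := by
      calc aRatio G ≤ 1/2 := hg
        _ ≤ 1 := by norm_num
    rw [max_eq_right this]
  · have hp : ¬ aRatio (tensorProd G H) ≤ 1/2 := by
      intro hcon
      exact hg (le_trans (aRatio_prod_ge_left G H) hcon)
    rw [if_neg hp, if_neg hg, if_pos hh]
    have : aRatio H ≤ 1 := by
      calc aRatio H ≤ 1/2 := hh
        _ ≤ 1 := by norm_num
    rw [max_eq_left this]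
  · have hp : ¬ aRatio (tensorProd G H) ≤ 1/2 := by
      intro hcon
      exact hg (le_trans (aRatio_prod_ge_left G H) hcon)
    rw [if_neg hp, if_neg hg, if_neg hh, max_self]
end ProdLemmas

section PowerIso
open Finset
variable {γ : Type*} [Fintype γ] (K : SimpleGraph γ)

lemma pow_one_adjEquiv : AdjEquiv (tensorPow K 1) K (Equiv.funUnique (Fin 1) γ) := by
  intro x y
  constructor
  · rintro ⟨hne, hall⟩
    exact hall default
  · intro h
    refine ⟨fun hxy => h.ne (congrArg _ hxy), fun i => ?_⟩
    have hi : i = default := Subsingleton.elim i default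
    rw [hi]
    exact h

lemma pow_succ_adjEquiv (m : ℕ) :
    AdjEquiv (tensorPow K (m + 2)) (tensorProd K (tensorPow K (m + 1)))
      (Fin.consEquiv (fun _ : Fin (m + 2) => γ)).symm := by
  intro x y
  constructor
  · rintro ⟨hne, hall⟩
    refine ⟨hall 0, ?_, fun i => hall i.succ⟩
    intro hteq
    exact (hall (Fin.succ 0)).ne (congrFun hteq 0)
  · rintro ⟨h0, hne, hall⟩
    refine ⟨fun hxy => h0.ne (congrFun hxy 0), fun i => ?_⟩
    refine Fin.cases h0 (fun j => hall j) i

lemma bRatio_pow [Nonempty γ] (h1 : 1 ≤ bRatio K) :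
    ∀ m : ℕ, bRatio K ≤ bRatio (tensorPow K (m + 1))
  | 0 => le_of_eq (pow_one_adjEquiv K).bRatio_eq.symm
  | (m+1) => by
      have ih := bRatio_pow h1 m
      rw [(pow_succ_adjEquiv K m).bRatio_eq]
      refine le_trans (le_min (le_refl _) ih)
        (bRatio_prod_ge K (tensorPow K (m+1)) h1 (le_trans h1 ih))

lemma card_funpow (m : ℕ) : Fintype.card (Fin m → γ) = (Fintype.card γ) ^ m := by
  simp

lemma iRatio_pow_mono [Nonempty γ] (k : ℕ) :
    iRatio (tensorPow K (k + 1)) ≤ iRatio (tensorPow K (k + 2)) := by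
  have heq := (pow_succ_adjEquiv K k).alpha_eq
  have hge := alphaNum_prod_right K (tensorPow K (k+1))
  unfold iRatio
  rw [heq, card_funpow, card_funpow]
  have hn : (0:ℝ) < (Fintype.card γ : ℝ) := by exact_mod_cast Fintype.card_pos
  push_cast
  rw [div_le_div_iff₀ (by positivity) (by positivity)]
  have hc : ((alphaNum (tensorPow K (k+1)) : ℝ) * (Fintype.card γ : ℝ))
      ≤ (alphaNum (tensorProd K (tensorPow K (k+1))) : ℝ) := by exact_mod_cast hge
  calc (alphaNum (tensorPow K (k+1)) : ℝ) * (Fintype.card γ : ℝ) ^ (k+2)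
      = ((alphaNum (tensorPow K (k+1)) : ℝ) * (Fintype.card γ : ℝ)) * (Fintype.card γ : ℝ) ^ (k+1) := by
        ring
    _ ≤ (alphaNum (tensorProd K (tensorPow K (k+1))) : ℝ) * (Fintype.card γ : ℝ) ^ (k+1) := by
        apply mul_le_mul_of_nonneg_right hc (by positivity)

lemma iRatio_le_one {δ : Type*} [Fintype δ] [Nonempty δ] (L : SimpleGraph δ) : iRatio L ≤ 1 := by
  unfold iRatio
  have hn : (0:ℝ) < (Fintype.card δ : ℝ) := by exact_mod_cast Fintype.card_pos
  rw [div_le_one hn]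
  exact_mod_cast alphaNum_le_card L

lemma iRatio_pow_le_aStar [Nonempty γ] (k : ℕ) :
    iRatio (tensorPow K (k + 1)) ≤ aStar K := by
  unfold aStar
  by_cases hg : aRatio K ≤ 1/2
  · rw [if_pos hg]
    have hb : 1 ≤ bRatio K := (one_le_bRatio_iff K).2 hg
    have hbp : bRatio K ≤ bRatio (tensorPow K (k+1)) := bRatio_pow K hb k
    obtain ⟨U, hI, hc⟩ := exists_alpha (tensorPow K (k+1))
    have hE := expand_of_le_bRatio (K := tensorPow K (k+1)) (c := bRatio K)
      (by linarith) hbp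
    have h2 := hE U hI
    have h3 : U.card + (nbhd (tensorPow K (k+1)) U).card ≤ Fintype.card (Fin (k+1) → γ) := by
      rw [← Finset.card_union_of_disjoint (indep_disjoint_nbhd hI)]
      exact Finset.card_le_univ _
    rw [aRatio_eq_inv]
    unfold iRatio
    rw [← hc]
    have hn : (0:ℝ) < (Fintype.card (Fin (k+1) → γ) : ℝ) := by exact_mod_cast Fintype.card_pos
    have hb0 : (0:ℝ) ≤ bRatio K := by linarith
    rw [div_le_div_iff₀ hn (by linarith)]
    have h3' : (U.card : ℝ) + ((nbhd (tensorPow K (k+1)) U).card : ℝ)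
        ≤ (Fintype.card (Fin (k+1) → γ) : ℝ) := by exact_mod_cast h3
    nlinarith
  · rw [if_neg hg]
    exact iRatio_le_one _
end PowerIso

section MixBound
open Finset
variable {γ1 γ2 : Type*} [Fintype γ1] [Fintype γ2]

lemma alphaNum_prod_mix (K : SimpleGraph γ1) (L : SimpleGraph γ2)
    {U : Finset γ1} (hI : IsIndep K U) :
    U.card * Fintype.card γ2 + (Finset.univ \ (U ∪ nbhd K U)).card * alphaNum L
      ≤ alphaNum (tensorProd K L) := by
  classical
  obtain ⟨V, hV, hVc⟩ := exists_alpha L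
  set W := Finset.univ \ (U ∪ nbhd K U) with hW
  set R := (U ×ˢ (Finset.univ : Finset γ2)) ∪ (W ×ˢ V) with hR
  have hWU : ∀ a ∈ W, a ∉ U := by
    intro a ha
    rw [hW, Finset.mem_sdiff] at ha
    exact fun hu => ha.2 (Finset.mem_union_left _ hu)
  have hWN : ∀ a ∈ W, a ∉ nbhd K U := by
    intro a ha
    rw [hW, Finset.mem_sdiff] at ha
    exact fun hu => ha.2 (Finset.mem_union_right _ hu)
  have hRI : IsIndep (tensorProd K L) R := by
    rintro ⟨a, b⟩ hab ⟨a', b'⟩ hab' ⟨hadjK, hadjL⟩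
    rw [hR, Finset.mem_union] at hab hab'
    rcases hab with h1 | h1 <;> rcases hab' with h2 | h2
    · exact hI a (Finset.mem_product.1 h1).1 a' (Finset.mem_product.1 h2).1 hadjK
    · refine hWN a' (Finset.mem_product.1 h2).1 ?_
      exact mem_nbhd.2 ⟨a, (Finset.mem_product.1 h1).1, hadjK⟩
    · refine hWN a (Finset.mem_product.1 h1).1 ?_
      exact mem_nbhd.2 ⟨a', (Finset.mem_product.1 h2).1, hadjK.symm⟩
    · exact hV b (Finset.mem_product.1 h1).2 b' (Finset.mem_product.1 h2).2 hadjL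
  have hdisj : Disjoint (U ×ˢ (Finset.univ : Finset γ2)) (W ×ˢ V) := by
    rw [Finset.disjoint_left]
    rintro ⟨a, b⟩ h1 h2
    exact hWU a (Finset.mem_product.1 h2).1 (Finset.mem_product.1 h1).1
  have hcard : R.card = U.card * Fintype.card γ2 + W.card * alphaNum L := by
    rw [hR, Finset.card_union_of_disjoint hdisj, Finset.card_product, Finset.card_product,
      Finset.card_univ, hVc]
  calc U.card * Fintype.card γ2 + W.card * alphaNum L = R.card := hcard.symm
    _ ≤ alphaNum (tensorProd K L) := le_alphaNum hRI
end MixBound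

section Majority
open Finset
variable {γ : Type*} [Fintype γ]

lemma majority_indep (K : SimpleGraph γ) {U : Finset γ} (m : ℕ) :
    IsIndep (tensorPow K m) (Finset.univ.filter (fun x : Fin m → γ =>
      (Finset.univ.filter (fun i => x i ∈ nbhd K U)).card
        < (Finset.univ.filter (fun i => x i ∈ U)).card)) := by
  intro x hx y hy hadj
  obtain ⟨hne, hall⟩ := hadj
  have h1 : (Finset.univ.filter (fun i => x i ∈ U)).card
      ≤ (Finset.univ.filter (fun i => y i ∈ nbhd K U)).card := by
    apply Finset.card_le_card
    intro i hi
    simp only [Finset.mem_filter, Finset.mem_univ, true_and] at hi ⊢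
    exact mem_nbhd.2 ⟨x i, hi, hall i⟩
  have h2 : (Finset.univ.filter (fun i => y i ∈ U)).card
      ≤ (Finset.univ.filter (fun i => x i ∈ nbhd K U)).card := by
    apply Finset.card_le_card
    intro i hi
    simp only [Finset.mem_filter, Finset.mem_univ, true_and] at hi ⊢
    exact mem_nbhd.2 ⟨y i, hi, (hall i).symm⟩
  simp only [Finset.mem_filter, Finset.mem_univ, true_and] at hx hy
  omega

lemma majority_bound [Nonempty γ] (K : SimpleGraph γ) {U : Finset γ} (hI : IsIndep K U)
    (hqu : (nbhd K U).card < U.card) (m : ℕ) :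
    ((Fintype.card γ : ℝ)) ^ m
      - (2 * Real.sqrt ((U.card : ℝ) * ((nbhd K U).card : ℝ))
          + ((Finset.univ \ (U ∪ nbhd K U)).card : ℝ)) ^ m
      ≤ (alphaNum (tensorPow K m) : ℝ) := by
  classical
  set Nset := nbhd K U with hNset
  set B : ℝ := 2 * Real.sqrt ((U.card : ℝ) * ((Nset.card : ℝ)))
      + ((Finset.univ \ (U ∪ Nset)).card : ℝ) with hB
  set p : (Fin m → γ) → Prop := fun x =>
    (Finset.univ.filter (fun i => x i ∈ Nset)).card
      < (Finset.univ.filter (fun i => x i ∈ U)).card with hp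
  have hsplit : (Finset.univ.filter p).card + (Finset.univ.filter (fun x => ¬ p x)).card
      = (Fintype.card γ) ^ m := by
    rw [Finset.card_filter_add_card_filter_not, Finset.card_univ]
    simp
  have halpha : (Finset.univ.filter p).card ≤ alphaNum (tensorPow K m) :=
    le_alphaNum (majority_indep K m)
  have hdisjUN : Disjoint U Nset := indep_disjoint_nbhd hI
  -- the key counting estimate
  have hT : ((Finset.univ.filter (fun x => ¬ p x)).card : ℝ) ≤ B ^ m := by
    rcases Nat.eq_zero_or_pos Nset.card with hq0 | hqpos
    · -- no neighbours at all
      have hNe : Nset = ∅ := Finset.card_eq_zero.1 hq0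
      have hTsub : (Finset.univ.filter (fun x => ¬ p x))
          ⊆ Fintype.piFinset (fun _ : Fin m => Finset.univ \ U) := by
        intro x hx
        simp only [Finset.mem_filter, Finset.mem_univ, true_and, hp, not_lt] at hx
        rw [Fintype.mem_piFinset]
        intro i
        rw [Finset.mem_sdiff]
        refine ⟨Finset.mem_univ _, fun hu => ?_⟩
        have hc1 : (Finset.univ.filter (fun i => x i ∈ Nset)).card = 0 := by
          rw [Finset.card_eq_zero]
          rw [Finset.filter_eq_empty_iff]
          intro j _
          rw [hNe]
          exact Finset.notMem_empty _
        have hc2 : 0 < (Finset.univ.filter (fun i => x i ∈ U)).card := by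
          rw [Finset.card_pos]
          exact ⟨i, Finset.mem_filter.2 ⟨Finset.mem_univ _, hu⟩⟩
        omega
      have hcard : (Finset.univ.filter (fun x => ¬ p x)).card
          ≤ ((Finset.univ \ U).card) ^ m := by
        refine le_trans (Finset.card_le_card hTsub) ?_
        rw [Fintype.card_piFinset]
        rw [Finset.prod_const, Finset.card_univ, Fintype.card_fin]
      have hBeq : B = ((Finset.univ \ U).card : ℝ) := by
        rw [hB, hq0]
        push_cast
        rw [mul_zero, Real.sqrt_zero, mul_zero, zero_add, hNe, Finset.union_empty]
      rw [hBeq]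
      calc ((Finset.univ.filter (fun x => ¬ p x)).card : ℝ)
          ≤ (((Finset.univ \ U).card : ℕ) ^ m : ℕ) := by exact_mod_cast hcard
        _ = ((Finset.univ \ U).card : ℝ) ^ m := by push_cast; ring
    · -- there is at least one neighbour
      have hu1 : 0 < U.card := lt_of_le_of_lt (Nat.zero_le _) hqu
      have hqR : (0:ℝ) < (Nset.card : ℝ) := by exact_mod_cast hqpos
      have huR : (0:ℝ) < (U.card : ℝ) := by exact_mod_cast hu1
      have huq : (Nset.card : ℝ) < (U.card : ℝ) := by exact_mod_cast hqu
      set lam : ℝ := Real.sqrt ((U.card : ℝ) / (Nset.card : ℝ)) with hlam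
      have hlam1 : 1 ≤ lam := by
        rw [hlam]
        rw [show (1:ℝ) = Real.sqrt 1 by rw [Real.sqrt_one]]
        apply Real.sqrt_le_sqrt
        rw [le_div_iff₀ hqR]
        linarith
      have hlampos : 0 < lam := lt_of_lt_of_le zero_lt_one hlam1
      set g : γ → ℝ := fun a => if a ∈ U then lam⁻¹ else if a ∈ Nset then lam else 1 with hg
      have hg0 : ∀ a, 0 ≤ g a := by
        intro a
        rw [hg]
        dsimp only
        split_ifs
        · positivity
        · positivity
        · norm_num
      -- each bad point has weight at least 1
      have hweight : ∀ x : Fin m → γ, ¬ p x → 1 ≤ ∏ i : Fin m, g (x i) := by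
        intro x hx
        rw [hp, not_lt] at hx
        rw [← Finset.prod_filter_mul_prod_filter_not Finset.univ (fun i => x i ∈ U)]
        have e1 : ∏ i ∈ Finset.univ.filter (fun i => x i ∈ U), g (x i)
            = lam⁻¹ ^ (Finset.univ.filter (fun i => x i ∈ U)).card := by
          rw [← Finset.prod_const]
          apply Finset.prod_congr rfl
          intro i hi
          simp only [Finset.mem_filter] at hi
          simp only [hg]
          rw [if_pos hi.2]
        have e2 : ∏ i ∈ Finset.univ.filter (fun i => ¬ x i ∈ U), g (x i)
            = lam ^ (Finset.univ.filter (fun i => x i ∈ Nset)).card := by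
          rw [← Finset.prod_filter_mul_prod_filter_not
            (Finset.univ.filter (fun i => ¬ x i ∈ U)) (fun i => x i ∈ Nset)]
          have e21 : (Finset.univ.filter (fun i => ¬ x i ∈ U)).filter (fun i => x i ∈ Nset)
              = Finset.univ.filter (fun i => x i ∈ Nset) := by
            rw [Finset.filter_filter]
            apply Finset.filter_congr
            intro i _
            constructor
            · rintro ⟨_, h⟩; exact h
            · intro h
              exact ⟨fun hU => Finset.disjoint_left.1 hdisjUN hU h, h⟩
          have e22 : ∏ i ∈ (Finset.univ.filter (fun i => ¬ x i ∈ U)).filter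
              (fun i => x i ∈ Nset), g (x i)
              = lam ^ (Finset.univ.filter (fun i => x i ∈ Nset)).card := by
            rw [e21, ← Finset.prod_const]
            apply Finset.prod_congr rfl
            intro i hi
            simp only [Finset.mem_filter] at hi
            simp only [hg]
            rw [if_neg (fun hU => Finset.disjoint_left.1 hdisjUN hU hi.2), if_pos hi.2]
          have e23 : ∏ i ∈ (Finset.univ.filter (fun i => ¬ x i ∈ U)).filter
              (fun i => ¬ x i ∈ Nset), g (x i) = 1 := by
            apply Finset.prod_eq_one
            intro i hi
            simp only [Finset.mem_filter] at hi
            simp only [hg]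
            rw [if_neg hi.1.2, if_neg hi.2]
          rw [e22, e23, mul_one]
        rw [e1, e2, inv_pow]
        have hpow : lam ^ (Finset.univ.filter (fun i => x i ∈ U)).card
            ≤ lam ^ (Finset.univ.filter (fun i => x i ∈ Nset)).card :=
          pow_le_pow_right₀ hlam1 hx
        have hne0 : (lam ^ (Finset.univ.filter (fun i => x i ∈ U)).card) ≠ 0 := by positivity
        calc (1:ℝ) = (lam ^ (Finset.univ.filter (fun i => x i ∈ U)).card)⁻¹
              * lam ^ (Finset.univ.filter (fun i => x i ∈ U)).card := (inv_mul_cancel₀ hne0).symm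
          _ ≤ (lam ^ (Finset.univ.filter (fun i => x i ∈ U)).card)⁻¹
              * lam ^ (Finset.univ.filter (fun i => x i ∈ Nset)).card := by
              apply mul_le_mul_of_nonneg_left hpow (by positivity)
      -- total weight equals B ^ m
      have htotal : ∑ x : Fin m → γ, ∏ i : Fin m, g (x i) = B ^ m := by
        have h1 : ∑ x ∈ Fintype.piFinset (fun _ : Fin m => (Finset.univ : Finset γ)),
            ∏ i : Fin m, g (x i) = ∏ i : Fin m, ∑ a : γ, g a :=
          (Finset.prod_univ_sum (fun _ => Finset.univ) (fun _ a => g a)).symm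
        rw [Fintype.piFinset_univ] at h1
        rw [h1, Finset.prod_const, Finset.card_univ, Fintype.card_fin]
        congr 1
        -- ∑ a, g a = B
        rw [← Finset.sum_filter_add_sum_filter_not Finset.univ (fun a => a ∈ U)]
        have s1 : ∑ a ∈ Finset.univ.filter (fun a => a ∈ U), g a = (U.card : ℝ) * lam⁻¹ := by
          rw [Finset.filter_univ_mem]
          have hcong : ∀ a ∈ U, g a = lam⁻¹ := fun a ha => by
            simp only [hg]; rw [if_pos ha]
          rw [Finset.sum_congr rfl hcong, Finset.sum_const, nsmul_eq_mul]
        have s2 : ∑ a ∈ Finset.univ.filter (fun a => ¬ a ∈ U), g a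
            = (Nset.card : ℝ) * lam + ((Finset.univ \ (U ∪ Nset)).card : ℝ) := by
          rw [← Finset.sum_filter_add_sum_filter_not
            (Finset.univ.filter (fun a => ¬ a ∈ U)) (fun a => a ∈ Nset)]
          have e21 : (Finset.univ.filter (fun a => ¬ a ∈ U)).filter (fun a => a ∈ Nset)
              = Nset := by
            rw [Finset.filter_filter]
            ext a
            simp only [Finset.mem_filter, Finset.mem_univ, true_and]
            constructor
            · rintro ⟨_, h⟩; exact h
            · intro h; exact ⟨fun hU => Finset.disjoint_left.1 hdisjUN hU h, h⟩
          have e22 : (Finset.univ.filter (fun a => ¬ a ∈ U)).filter (fun a => ¬ a ∈ Nset)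
              = Finset.univ \ (U ∪ Nset) := by
            rw [Finset.filter_filter]
            ext a
            simp only [Finset.mem_filter, Finset.mem_univ, true_and, Finset.mem_sdiff,
              Finset.mem_union]
            tauto
          rw [e21, e22]
          have s21 : ∑ a ∈ Nset, g a = (Nset.card : ℝ) * lam := by
            have hcong : ∀ a ∈ Nset, g a = lam := fun a ha => by
              simp only [hg]
              rw [if_neg (fun hU => Finset.disjoint_left.1 hdisjUN hU ha), if_pos ha]
            rw [Finset.sum_congr rfl hcong, Finset.sum_const, nsmul_eq_mul]
          have s22 : ∑ a ∈ Finset.univ \ (U ∪ Nset), g a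
              = ((Finset.univ \ (U ∪ Nset)).card : ℝ) := by
            have hcong : ∀ a ∈ Finset.univ \ (U ∪ Nset), g a = 1 := fun a ha => by
              rw [Finset.mem_sdiff, Finset.mem_union] at ha
              simp only [hg]
              rw [if_neg (fun hU => ha.2 (Or.inl hU)), if_neg (fun hN => ha.2 (Or.inr hN))]
            rw [Finset.sum_congr rfl hcong, Finset.sum_const, nsmul_eq_mul, mul_one]
          rw [s21, s22]
        rw [s1, s2, hB]
        -- u·λ⁻¹ + q·λ = 2√(uq)
        have hql : (Nset.card : ℝ) * lam = Real.sqrt ((U.card : ℝ) * (Nset.card : ℝ)) := by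
          rw [hlam, show (U.card : ℝ) * (Nset.card : ℝ)
            = ((Nset.card : ℝ))^2 * ((U.card : ℝ) / (Nset.card : ℝ)) by field_simp,
            Real.sqrt_mul (sq_nonneg _), Real.sqrt_sq (le_of_lt hqR)]
        have hul : (U.card : ℝ) * lam⁻¹ = Real.sqrt ((U.card : ℝ) * (Nset.card : ℝ)) := by
          rw [hlam, ← Real.sqrt_inv, show ((U.card : ℝ) / (Nset.card : ℝ))⁻¹
            = (Nset.card : ℝ) / (U.card : ℝ) by rw [inv_div],
            show (U.card : ℝ) * (Nset.card : ℝ)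
            = ((U.card : ℝ))^2 * ((Nset.card : ℝ) / (U.card : ℝ)) by field_simp,
            Real.sqrt_mul (sq_nonneg _), Real.sqrt_sq (le_of_lt huR)]
        rw [hql, hul]
        ring
      -- combine
      calc ((Finset.univ.filter (fun x => ¬ p x)).card : ℝ)
          = ∑ x ∈ Finset.univ.filter (fun x => ¬ p x), (1:ℝ) := by
            rw [Finset.sum_const, nsmul_eq_mul, mul_one]
        _ ≤ ∑ x ∈ Finset.univ.filter (fun x => ¬ p x), ∏ i : Fin m, g (x i) := by
            apply Finset.sum_le_sum
            intro x hx
            simp only [Finset.mem_filter, Finset.mem_univ, true_and] at hx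
            exact hweight x hx
        _ ≤ ∑ x : Fin m → γ, ∏ i : Fin m, g (x i) := by
            apply Finset.sum_le_sum_of_subset_of_nonneg (Finset.filter_subset _ _)
            intro x _ _
            exact Finset.prod_nonneg (fun i _ => hg0 (x i))
        _ = B ^ m := htotal
  -- conclude
  have hs : ((Finset.univ.filter p).card : ℝ)
      + ((Finset.univ.filter (fun x => ¬ p x)).card : ℝ) = ((Fintype.card γ : ℝ)) ^ m := by
    rw [← Nat.cast_add, hsplit]
    push_cast
    ring
  have halphaR : ((Finset.univ.filter p).card : ℝ) ≤ (alphaNum (tensorPow K m) : ℝ) := by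
    exact_mod_cast halpha
  linarith
end Majority

section Convergence
open Finset
variable {γ : Type*} [Fintype γ] [Nonempty γ]

lemma iRatio_pow_eq (K : SimpleGraph γ) (m : ℕ) :
    iRatio (tensorPow K m) = (alphaNum (tensorPow K m) : ℝ) / ((Fintype.card γ : ℝ)) ^ m := by
  unfold iRatio
  rw [card_funpow]
  push_cast
  ring

lemma card_partition (K : SimpleGraph γ) {U : Finset γ} (hI : IsIndep K U) :
    Fintype.card γ = U.card + (nbhd K U).card + (Finset.univ \ (U ∪ nbhd K U)).card := by
  have h1 : (Finset.univ \ (U ∪ nbhd K U)).card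
      = Finset.univ.card - (U ∪ nbhd K U).card := Finset.card_sdiff_of_subset (Finset.subset_univ _)
  have h2 : (U ∪ nbhd K U).card ≤ Finset.univ.card := Finset.card_le_card (Finset.subset_univ _)
  have h3 : (U ∪ nbhd K U).card = U.card + (nbhd K U).card :=
    Finset.card_union_of_disjoint (indep_disjoint_nbhd hI)
  have h4 : (Finset.univ : Finset γ).card = Fintype.card γ := Finset.card_univ
  omega

theorem tendsto_iRatio_pow (K : SimpleGraph γ) :
    Filter.Tendsto (fun k : ℕ => iRatio (tensorPow K (k + 1))) Filter.atTop (nhds (aStar K)) := by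
  have hmono : Monotone (fun k : ℕ => iRatio (tensorPow K (k + 1))) :=
    monotone_nat_of_le_succ (fun k => iRatio_pow_mono K k)
  have hbdd : BddAbove (Set.range (fun k : ℕ => iRatio (tensorPow K (k + 1)))) := by
    refine ⟨1, ?_⟩
    rintro x ⟨k, rfl⟩
    exact iRatio_le_one _
  have htend := tendsto_atTop_ciSup hmono hbdd
  have hnR : (0:ℝ) < (Fintype.card γ : ℝ) := by exact_mod_cast Fintype.card_pos
  have hle : (⨆ k : ℕ, iRatio (tensorPow K (k+1))) ≤ aStar K :=
    ciSup_le (fun k => iRatio_pow_le_aStar K k)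
  have hge : aStar K ≤ (⨆ k : ℕ, iRatio (tensorPow K (k+1))) := by
    obtain ⟨U, hU, hI, hval⟩ := aRatio_mem K
    set un := (U.card : ℝ) with hun
    set qn := ((nbhd K U).card : ℝ) with hqn
    set wn := ((Finset.univ \ (U ∪ nbhd K U)).card : ℝ) with hwn
    set nn := (Fintype.card γ : ℝ) with hnn'
    have hupos : (0:ℝ) < un := by rw [hun]; exact_mod_cast hU.card_pos
    have hu1 : (1:ℝ) ≤ un := by rw [hun]; exact_mod_cast hU.card_pos
    have hq0 : (0:ℝ) ≤ qn := by rw [hqn]; positivity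
    have hw0 : (0:ℝ) ≤ wn := by rw [hwn]; positivity
    have hnn : nn = un + qn + wn := by
      rw [hun, hqn, hwn, hnn']
      exact_mod_cast card_partition K hI
    by_cases hg : aRatio K ≤ 1/2
    · -- small case : aStar = aRatio
      set r := aRatio K with hr
      have hr1 : r * (un + qn) = un := by
        rw [hval]
        field_simp
      have key : un + wn * r = r * nn := by
        rw [hnn]
        linear_combination -hr1
      have claim : ∀ k : ℕ, r * nn^(k+1) + wn^k * (un - r*nn)
          ≤ (alphaNum (tensorPow K (k+1)) : ℝ) := by
        intro k
        induction k with
        | zero =>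
          have h0 : alphaNum (tensorPow K 1) = alphaNum K := (pow_one_adjEquiv K).alpha_eq
          rw [h0]
          have h1 : un ≤ (alphaNum K : ℝ) := by
            rw [hun]; exact_mod_cast le_alphaNum hI
          calc r * nn^(0+1) + wn^0*(un - r*nn) = un := by ring
            _ ≤ _ := h1
        | succ k ih =>
          have hmix := alphaNum_prod_mix K (tensorPow K (k+1)) hI
          rw [card_funpow] at hmix
          have heq : alphaNum (tensorPow K (k+2)) = alphaNum (tensorProd K (tensorPow K (k+1))) :=
            (pow_succ_adjEquiv K k).alpha_eq
          have hmixR : un * nn^(k+1) + wn * (alphaNum (tensorPow K (k+1)) : ℝ)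
              ≤ (alphaNum (tensorPow K (k+2)) : ℝ) := by
            rw [heq, hun, hwn, hnn']
            exact_mod_cast hmix
          calc r * nn^(k+1+1) + wn^(k+1) * (un - r*nn)
              = un * nn^(k+1) + wn * (r * nn^(k+1) + wn^k*(un - r*nn)) := by
                linear_combination (-(nn^(k+1))) * key
            _ ≤ un * nn^(k+1) + wn * (alphaNum (tensorPow K (k+1)) : ℝ) := by
                have h2 := mul_le_mul_of_nonneg_left ih hw0
                linarith
            _ ≤ _ := hmixR
      have hlow : ∀ k : ℕ, r + (wn/nn)^k * ((un - r*nn)/nn) ≤ iRatio (tensorPow K (k+1)) := by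
        intro k
        rw [iRatio_pow_eq]
        rw [le_div_iff₀ (by positivity)]
        calc (r + (wn/nn)^k * ((un - r*nn)/nn)) * (Fintype.card γ : ℝ)^(k+1)
            = r * nn^(k+1) + wn^k * (un - r*nn) := by
              rw [div_pow]
              rw [← hnn']
              field_simp
              ring
          _ ≤ _ := claim k
      have htendlow : Filter.Tendsto (fun k : ℕ => r + (wn/nn)^k * ((un - r*nn)/nn))
          Filter.atTop (nhds r) := by
        have h0 : Filter.Tendsto (fun k : ℕ => (wn/nn)^k) Filter.atTop (nhds 0) := by
          apply tendsto_pow_atTop_nhds_zero_of_lt_one (by positivity)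
          rw [div_lt_one hnR]
          linarith
        have h1 := h0.mul_const ((un - r*nn)/nn)
        have h2 := h1.const_add r
        simpa using h2
      have hfin : r ≤ ⨆ k : ℕ, iRatio (tensorPow K (k+1)) :=
        le_of_tendsto_of_tendsto' htendlow htend hlow
      unfold aStar
      rw [if_pos hg]
      exact hfin
    · -- big case : aStar = 1
      unfold aStar
      rw [if_neg hg]
      push_neg at hg
      have hqu : (nbhd K U).card < U.card := by
        by_contra hcon
        push_neg at hcon
        have hcon' : un ≤ qn := by rw [hun, hqn]; exact_mod_cast hcon
        have : aRatio K ≤ 1/2 := by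
          rw [hval, div_le_div_iff₀ (by positivity) (by norm_num)]
          linarith
        linarith
      have hltuq : qn < un := by rw [hun, hqn]; exact_mod_cast hqu
      set B : ℝ := 2*Real.sqrt (un * qn) + wn with hB
      have hB0 : (0:ℝ) ≤ B := by rw [hB]; positivity
      have hBn : B < nn := by
        rw [hB, hnn]
        have hsq : Real.sqrt (un*qn)^2 = un*qn := Real.sq_sqrt (by positivity)
        have hd : (0:ℝ) < (un - qn)^2 := by
          apply pow_pos
          linarith
        nlinarith [Real.sqrt_nonneg (un*qn), hsq, hd, hupos, hq0]
      have hlow : ∀ k : ℕ, 1 - (B/nn)^(k+1) ≤ iRatio (tensorPow K (k+1)) := by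
        intro k
        rw [iRatio_pow_eq]
        have hm := majority_bound K hI hqu (k+1)
        rw [le_div_iff₀ (by positivity)]
        calc (1 - (B/nn)^(k+1)) * (Fintype.card γ : ℝ)^(k+1)
            = nn^(k+1) - B^(k+1) := by
              rw [div_pow, ← hnn']
              field_simp
          _ ≤ _ := by
              rw [hB, hun, hqn, hwn, hnn']
              exact hm
      have htendlow : Filter.Tendsto (fun k : ℕ => 1 - (B/nn)^(k+1)) Filter.atTop (nhds 1) := by
        have h0 : Filter.Tendsto (fun k : ℕ => (B/nn)^k) Filter.atTop (nhds 0) :=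
          tendsto_pow_atTop_nhds_zero_of_lt_one (by positivity)
            (by rw [div_lt_one hnR]; exact hBn)
        have h1 : Filter.Tendsto (fun k : ℕ => (B/nn)^(k+1)) Filter.atTop (nhds 0) := by
          have h2 := h0.comp (Filter.tendsto_add_atTop_nat 1)
          exact h2
        have h3 := h1.const_sub 1
        simpa using h3
      exact le_of_tendsto_of_tendsto' htendlow htend hlow
  have hsup : (⨆ k : ℕ, iRatio (tensorPow K (k+1))) = aStar K := le_antisymm hle hge
  rwa [hsup] at htend
end Convergence

theorem stmt16 {α β : Type*} [Fintype α] [Fintype β] [Nonempty α] [Nonempty β]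
    (G : SimpleGraph α) (H : SimpleGraph β) (LG LH : ℝ)
    (hG : Tendsto (fun k : ℕ => iRatio (tensorPow G (k + 1))) atTop (nhds LG))
    (hH : Tendsto (fun k : ℕ => iRatio (tensorPow H (k + 1))) atTop (nhds LH)) :
    Tendsto (fun k : ℕ => iRatio (tensorPow (tensorProd G H) (k + 1))) atTop
      (nhds (max LG LH)) := by
  have tG := tendsto_iRatio_pow G
  have tH := tendsto_iRatio_pow H
  have tP := tendsto_iRatio_pow (tensorProd G H)
  have hLG : LG = aStar G := tendsto_nhds_unique hG tG
  have hLH : LH = aStar H := tendsto_nhds_unique hH tH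
  rw [hLG, hLH, ← aStar_prod G H]
  exact tP
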